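/- Let q ∈ ℂ with |q| > 1 and let n be a positive integer. Then the double series Σ_{a=1}^∞ Σ_{b=1}^∞ 1/(q^{an} + q^{bn}) converges and Σ_{a=1}^∞ Σ_{b=1}^∞ 1/(q^{an} + q^{bn}) = (1/(1 − q^n))·(−1/2 − 2·Σ_{a=1}^∞ 1/(q^{an} + 1)). -/

import Mathlib

set_option maxHeartbeats 1000000


/-- Let `q ∈ ℂ` with `|q| > 1` and let `n` be a positive integer.  Then the double
series `Σ_{a≥1} Σ_{b≥1} 1/(q^{an} + q^{bn})` converges and equals
`(1/(1-q^n))·(-1/2 - 2·Σ_{a≥1} 1/(q^{an} + 1))`. -/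
theorem q_double_sum_eval (q : ℂ) (hq : 1 < ‖q‖) (n : ℕ) (hn : 0 < n) :
    (∀ a : ℕ, Summable (fun b : ℕ => 1 / (q ^ ((a + 1) * n) + q ^ ((b + 1) * n)))) ∧
    Summable (fun a : ℕ => ∑' b : ℕ, 1 / (q ^ ((a + 1) * n) + q ^ ((b + 1) * n))) ∧
    Summable (fun a : ℕ => 1 / (q ^ ((a + 1) * n) + 1)) ∧
    (∑' (a : ℕ) (b : ℕ), 1 / (q ^ ((a + 1) * n) + q ^ ((b + 1) * n)))
      = (1 / (1 - q ^ n)) * (-(1 / 2) - 2 * ∑' a : ℕ, 1 / (q ^ ((a + 1) * n) + 1)) := by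
  simp only [show ∀ m : ℕ, q ^ (m * n) = (q ^ n) ^ m from fun m => by rw [mul_comm, pow_mul]]
  have hq' : (1:ℝ) < ‖q‖ := by exact hq
  have hw1' : (1:ℝ) < ‖q ^ n‖ := by rw [norm_pow]; exact one_lt_pow₀ hq' hn.ne'
  obtain ⟨w, hwdef⟩ : ∃ w : ℂ, q ^ n = w := ⟨_, rfl⟩
  rw [hwdef]
  have hw1 : (1:ℝ) < ‖w‖ := hwdef ▸ hw1'
  have hw0 : w ≠ 0 := norm_pos_iff.mp (by linarith)
  have hr : ‖w⁻¹‖ < 1 := by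
    rw [norm_inv]
    exact inv_lt_one_of_one_lt₀ hw1
  have hgeom : Summable (fun k : ℕ => ‖w⁻¹‖ ^ k) :=
    summable_geometric_of_lt_one (norm_nonneg _) hr
  -- norms of denominators
  have hlow : ∀ k : ℕ, (‖w‖ - 1) * ‖w‖ ^ k ≤ ‖w ^ (k + 1) + 1‖ := by
    intro k
    have h1 : ‖w ^ (k + 1)‖ ≤ ‖w ^ (k + 1) + 1‖ + ‖(1:ℂ)‖ := by
      calc ‖w ^ (k + 1)‖ = ‖(w ^ (k + 1) + 1) - 1‖ := by ring_nf
        _ ≤ ‖w ^ (k + 1) + 1‖ + ‖(1:ℂ)‖ := norm_sub_le _ _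
    have h2 : (1:ℝ) ≤ ‖w‖ ^ k := one_le_pow₀ hw1.le
    have h3 : ‖w ^ (k + 1)‖ = ‖w‖ ^ k * ‖w‖ := by rw [norm_pow, pow_succ]
    simp only [norm_one] at h1
    nlinarith
  -- summability of 1/(w^(k+1)+1) in norm
  have hT_norm : Summable (fun k : ℕ => ‖1 / (w ^ (k + 1) + 1)‖) := by
    apply Summable.of_nonneg_of_le (fun k => norm_nonneg _) ?_ (hgeom.mul_left ((‖w‖ - 1)⁻¹))
    intro k
    have hd := hlow k
    have hpos : (0:ℝ) < (‖w‖ - 1) * ‖w‖ ^ k :=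
      mul_pos (by linarith) (pow_pos (by linarith) k)
    rw [one_div, norm_inv]
    rw [show (‖w‖ - 1)⁻¹ * ‖w⁻¹‖ ^ k = ((‖w‖ - 1) * ‖w‖ ^ k)⁻¹ by
      rw [norm_inv, inv_pow, mul_inv]]
    exact inv_anti₀ hpos hd
  have hT : Summable (fun k : ℕ => 1 / (w ^ (k + 1) + 1)) := hT_norm.of_norm
  obtain ⟨T, hTdef⟩ : ∃ T : ℂ, ∑' k : ℕ, 1 / (w ^ (k + 1) + 1) = T := ⟨_, rfl⟩
  rw [hTdef]
  -- the factors of the Cauchy product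
  have hu_norm : Summable (fun k : ℕ => ‖1 / (w ^ k + 1)‖) :=
    (summable_nat_add_iff 1).mp hT_norm
  have hu : Summable (fun k : ℕ => 1 / (w ^ k + 1)) := hu_norm.of_norm
  have hv_norm : Summable (fun j : ℕ => ‖(w⁻¹) ^ (j + 1)‖) := by
    simpa only [norm_pow] using (summable_nat_add_iff 1).mpr hgeom
  have hv : Summable (fun j : ℕ => (w⁻¹) ^ (j + 1)) := hv_norm.of_norm
  obtain ⟨g, hgdef⟩ : ∃ g : ℕ → ℂ,
      g = fun a => ∑ k ∈ Finset.range (a + 1), (1 / (w ^ k + 1)) * (w⁻¹) ^ (a - k + 1) :=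
    ⟨_, rfl⟩
  have hg_norm : Summable (fun a => ‖g a‖) := by
    have h := summable_norm_sum_mul_range_of_summable_norm hu_norm hv_norm
    rw [hgdef]; exact h
  have hg : Summable g := hg_norm.of_norm
  have hCauchy : ∑' a, g a = (∑' k : ℕ, 1 / (w ^ k + 1)) * (∑' j : ℕ, (w⁻¹) ^ (j + 1)) := by
    have h := tsum_mul_tsum_eq_tsum_sum_range_of_summable_norm hu_norm hv_norm
    rw [hgdef]; exact h.symm
  -- tail terms factor
  have hrow_tail_fun : ∀ a b : ℕ,
      1 / (w ^ (a + 1) + w ^ (b + (a + 1) + 1)) = (w⁻¹) ^ (a + 1) * (1 / (w ^ (b + 1) + 1)) := by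
    intro a b
    have h1 : w ^ (b + (a + 1) + 1) = w ^ (a + 1) * w ^ (b + 1) := by
      rw [← pow_add]; congr 1; omega
    rw [h1, show w ^ (a + 1) + w ^ (a + 1) * w ^ (b + 1) = w ^ (a + 1) * (w ^ (b + 1) + 1) by ring]
    simp only [one_div, mul_inv, inv_pow]
  -- head terms are Cauchy product terms
  have hrow_head : ∀ a : ℕ,
      ∑ b ∈ Finset.range (a + 1), 1 / (w ^ (a + 1) + w ^ (b + 1)) = g a := by
    intro a
    rw [hgdef, ← Finset.sum_range_reflect (fun b => 1 / (w ^ (a + 1) + w ^ (b + 1))) (a + 1)]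
    apply Finset.sum_congr rfl
    intro k hk
    have hk' : k ≤ a := Nat.lt_succ_iff.mp (Finset.mem_range.mp hk)
    have he : a + 1 - 1 - k = a - k := by omega
    rw [he]
    have h1 : w ^ (a + 1) = w ^ k * w ^ (a - k + 1) := by
      rw [← pow_add]; congr 1; omega
    rw [h1, show w ^ k * w ^ (a - k + 1) + w ^ (a - k + 1) = (w ^ k + 1) * w ^ (a - k + 1) by ring]
    simp only [one_div, mul_inv, inv_pow]
  -- Claim 1
  have hC1 : ∀ a : ℕ, Summable (fun b : ℕ => 1 / (w ^ (a + 1) + w ^ (b + 1))) := by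
    intro a
    apply (summable_nat_add_iff (a + 1)).mp
    simp only [hrow_tail_fun a]
    exact hT.mul_left _
  -- row values
  have hrow : ∀ a : ℕ,
      ∑' b : ℕ, 1 / (w ^ (a + 1) + w ^ (b + 1)) = g a + (w⁻¹) ^ (a + 1) * T := by
    intro a
    rw [← (hC1 a).sum_add_tsum_nat_add (a + 1)]
    congr 1
    · exact hrow_head a
    · simp only [hrow_tail_fun a]
      rw [tsum_mul_left, hTdef]
  -- Claim 2
  have hC2' : Summable (fun a : ℕ => g a + (w⁻¹) ^ (a + 1) * T) := hg.add (hv.mul_right T)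
  have hC2 : Summable (fun a : ℕ => ∑' b : ℕ, 1 / (w ^ (a + 1) + w ^ (b + 1))) := by
    simp only [hrow]; exact hC2'
  refine ⟨hC1, hC2, hT, ?_⟩
  -- evaluate the geometric series
  have hV : (∑' j : ℕ, (w⁻¹) ^ (j + 1)) = w⁻¹ * (1 - w⁻¹)⁻¹ := by
    simp only [pow_succ']
    rw [tsum_mul_left, tsum_geometric_of_norm_lt_one hr]
  have hU : (∑' k : ℕ, 1 / (w ^ k + 1)) = 2⁻¹ + T := by
    rw [hu.tsum_eq_zero_add, ← hTdef]
    norm_num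
  calc (∑' (a : ℕ) (b : ℕ), 1 / (w ^ (a + 1) + w ^ (b + 1)))
      = ∑' a : ℕ, (g a + (w⁻¹) ^ (a + 1) * T) := by simp only [hrow]
    _ = (∑' a, g a) + ∑' a : ℕ, (w⁻¹) ^ (a + 1) * T := hg.tsum_add (hv.mul_right T)
    _ = (2⁻¹ + T) * (w⁻¹ * (1 - w⁻¹)⁻¹) + (w⁻¹ * (1 - w⁻¹)⁻¹) * T := by
        rw [hCauchy, hU, hV, tsum_mul_right, hV]
    _ = (1 / (1 - w)) * (-(1 / 2) - 2 * T) := by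
        have hne : (1:ℂ) - w ≠ 0 := by
          intro h
          have : w = 1 := by linear_combination -h
          rw [this, norm_one] at hw1; exact lt_irrefl _ hw1
        have hne' : (1:ℂ) - w⁻¹ ≠ 0 := by
          intro h
          have : w⁻¹ = 1 := by linear_combination -h
          rw [this, norm_one] at hr; exact lt_irrefl _ hr
        have hne2 : w - 1 ≠ 0 := by intro h; apply hne; linear_combination -h
        have hfac : w⁻¹ * (1 - w⁻¹)⁻¹ = (w - 1)⁻¹ := by
          rw [← mul_inv]; congr 1; field_simp
        rw [hfac]
        field_simp [hne2]
        ring
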